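/- Let X_{ij} ~ N(θ_i, σ²) independent for i = 1,…,n, j = 1,…,k with k ≥ 2 fixed. The maximum likelihood estimator of σ², namely σ̂² = (1/(nk)) Σ_i Σ_j (X_{ij} − X̄_i)², converges in probability to (k−1)σ²/k as n → ∞, and hence is an inconsistent estimator of σ². (Neyman–Scott phenomenon.) -/

import Mathlib

open MeasureTheory ProbabilityTheory Filter Real Set Topology
open scoped NNReal ENNReal

namespace NeymanScottAux

lemma tendsto_mul_exp_neg_mul_sq {b : ℝ} (hb : 0 < b) :
    Tendsto (fun x : ℝ => x * rexp (-b * x ^ 2)) atTop (𝓝 0) := by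
  have h := rpow_mul_exp_neg_mul_sq_isLittleO_exp_neg hb 1
  have h2 : Tendsto (fun x : ℝ => rexp (-(1 / 2) * x)) atTop (𝓝 0) := by
    have : Tendsto (fun x : ℝ => -(1 / 2) * x) atTop atBot := by
      apply Tendsto.const_mul_atTop_of_neg (by norm_num) tendsto_id
    exact Real.tendsto_exp_atBot.comp this
  have h3 := h.trans_tendsto h2
  refine h3.congr' ?_
  filter_upwards [eventually_gt_atTop (0:ℝ)] with x hx
  rw [Real.rpow_one]

lemma integral_Ioi_sq_mul_exp {b : ℝ} (hb : 0 < b) :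
    ∫ x in Ioi (0:ℝ), x ^ 2 * rexp (-b * x ^ 2) = √(π / b) / (4 * b) := by
  have hint2 : Integrable (fun x : ℝ => x ^ 2 * rexp (-b * x ^ 2)) := by
    have h0 := integrable_rpow_mul_exp_neg_mul_sq hb (s := 2) (by norm_num)
    have heq : (fun x : ℝ => x ^ (2:ℝ) * rexp (-b * x ^ 2)) = fun x : ℝ => x ^ 2 * rexp (-b * x ^ 2) := by
      funext x
      rw [show ((2:ℝ)) = ((2:ℕ):ℝ) by norm_num, Real.rpow_natCast]
    rwa [heq] at h0
  have hint1 : Integrable (fun x : ℝ => rexp (-b * x ^ 2)) := integrable_exp_neg_mul_sq hb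
  set F : ℝ → ℝ := fun x => -(x / (2 * b)) * rexp (-b * x ^ 2) with hF
  have hderiv : ∀ x ∈ Ici (0:ℝ), HasDerivAt F
      (x ^ 2 * rexp (-b * x ^ 2) - (1 / (2 * b)) * rexp (-b * x ^ 2)) x := by
    intro x _
    have h1 : HasDerivAt (fun x : ℝ => -(x / (2 * b))) (-(1 / (2 * b))) x := by
      simpa [Pi.neg_def] using ((hasDerivAt_id x).div_const (2 * b)).neg
    have h2 : HasDerivAt (fun x : ℝ => rexp (-b * x ^ 2)) ((-b * (2 * x)) * rexp (-b * x ^ 2)) x := by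
      have : HasDerivAt (fun x : ℝ => -b * x ^ 2) (-b * (2 * x)) x := by
        simpa using (hasDerivAt_pow 2 x).const_mul (-b)
      simpa [mul_comm] using this.exp
    have := h1.fun_mul h2
    refine this.congr_deriv ?_
    rw [show -(x / (2 * b)) * (-b * (2 * x) * rexp (-b * x ^ 2)) = x ^ 2 * rexp (-b * x ^ 2) * (b / b) by ring, div_self hb.ne']
    ring
  have hFtend : Tendsto F atTop (𝓝 0) := by
    have := (tendsto_mul_exp_neg_mul_sq hb).const_mul (-(1 / (2 * b)))
    rw [mul_zero] at this
    refine this.congr (fun x => ?_)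
    simp [hF]; ring
  have hint' : IntegrableOn
      (fun x : ℝ => x ^ 2 * rexp (-b * x ^ 2) - (1 / (2 * b)) * rexp (-b * x ^ 2)) (Ioi 0) :=
    (hint2.sub (hint1.const_mul _)).integrableOn
  have key := integral_Ioi_of_hasDerivAt_of_tendsto' hderiv hint' hFtend
  have hF0 : F 0 = 0 := by simp [hF]
  rw [hF0, sub_zero] at key
  have split := integral_sub (hint2.integrableOn (s := Ioi 0)) ((hint1.const_mul (1 / (2*b))).integrableOn (s := Ioi 0))
  rw [key] at split
  have hIoi := integral_gaussian_Ioi b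
  have : (∫ x in Ioi (0:ℝ), x ^ 2 * rexp (-b * x ^ 2))
      = ∫ x in Ioi (0:ℝ), (1 / (2 * b)) * rexp (-b * x ^ 2) := by linarith [split]
  rw [this, integral_const_mul, hIoi, div_mul_div_comm, one_mul]
  congr 1
  ring

lemma integral_sq_mul_exp {b : ℝ} (hb : 0 < b) :
    ∫ x : ℝ, x ^ 2 * rexp (-b * x ^ 2) = √(π / b) / (2 * b) := by
  have h := integral_comp_abs (f := fun x : ℝ => x ^ 2 * rexp (-b * x ^ 2))
  have heq : (fun x : ℝ => |x| ^ 2 * rexp (-b * |x| ^ 2)) = fun x : ℝ => x ^ 2 * rexp (-b * x ^ 2) := by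
    funext x; rw [sq_abs]
  rw [heq] at h
  rw [h, integral_Ioi_sq_mul_exp hb]
  ring

lemma integral_gaussianReal_eq (μm : ℝ) {v : ℝ≥0} (hv : v ≠ 0) (g : ℝ → ℝ) :
    ∫ x, g x ∂(gaussianReal μm v) = ∫ x, gaussianPDFReal μm v x * g x := by
  rw [gaussianReal_of_var_ne_zero _ hv]
  have hm : Measurable fun x => (gaussianPDFReal μm v x).toNNReal :=
    (stronglyMeasurable_gaussianPDFReal μm v).measurable.real_toNNReal
  have h := integral_withDensity_eq_integral_smul (μ := volume) hm g
  have heq : (volume.withDensity fun x => ((gaussianPDFReal μm v x).toNNReal : ℝ≥0∞))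
      = volume.withDensity (gaussianPDF μm v) := rfl
  rw [heq] at h
  rw [h]
  congr 1; funext x
  rw [NNReal.smul_def, smul_eq_mul, Real.coe_toNNReal _ (gaussianPDFReal_nonneg _ _ _)]

lemma integrable_gaussianReal (μm : ℝ) {v : ℝ≥0} (hv : v ≠ 0) {g : ℝ → ℝ}
    (h : Integrable (fun x => gaussianPDFReal μm v x * g x) volume) :
    Integrable g (gaussianReal μm v) := by
  rw [gaussianReal_of_var_ne_zero _ hv]
  have hm : Measurable fun x => (gaussianPDFReal μm v x).toNNReal :=
    (stronglyMeasurable_gaussianPDFReal μm v).measurable.real_toNNReal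
  have heq : (volume.withDensity fun x => ((gaussianPDFReal μm v x).toNNReal : ℝ≥0∞))
      = volume.withDensity (gaussianPDF μm v) := rfl
  rw [← heq]
  refine (integrable_withDensity_iff_integrable_smul (μ := volume) hm (g := g)).2 ?_
  refine h.congr (.of_forall fun x => ?_)
  simp only [NNReal.smul_def, smul_eq_mul, Real.coe_toNNReal _ (gaussianPDFReal_nonneg _ _ _)]

lemma pdf_zero_mul (v : ℝ≥0) (g : ℝ → ℝ) (x : ℝ) :
    gaussianPDFReal 0 v x * g x
      = (√(2 * π * v))⁻¹ * (g x * rexp (-(2 * (v:ℝ))⁻¹ * x ^ 2)) := by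
  rw [gaussianPDFReal]
  rw [show -(x - 0) ^ 2 / (2 * (v:ℝ)) = -(2 * (v:ℝ))⁻¹ * x ^ 2 by ring]
  ring

lemma integrable_id_gaussianReal {v : ℝ≥0} (hv : v ≠ 0) :
    Integrable (fun x : ℝ => x) (gaussianReal 0 v) := by
  apply integrable_gaussianReal 0 hv
  have hvpos : (0:ℝ) < v := by positivity
  have hb : 0 < (2 * (v:ℝ))⁻¹ := by positivity
  have h := (integrable_mul_exp_neg_mul_sq hb).const_mul (√(2 * π * (v:ℝ)))⁻¹
  refine h.congr (.of_forall fun x => ?_)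
  simpa using (pdf_zero_mul v (fun y => y) x).symm

lemma integral_id_gaussianReal {v : ℝ≥0} (hv : v ≠ 0) :
    ∫ x, x ∂(gaussianReal 0 v) = 0 := by
  rw [integral_gaussianReal_eq 0 hv]
  simp_rw [pdf_zero_mul v (fun x => x)]
  rw [integral_const_mul]
  set c : ℝ := (2 * (v:ℝ))⁻¹ with hc
  have hodd : ∫ x : ℝ, x * rexp (-c * x ^ 2) = 0 := by
    have h := integral_neg_eq_self (fun x : ℝ => x * rexp (-c * x ^ 2)) volume
    have heq : (fun x : ℝ => -x * rexp (-c * (-x) ^ 2)) = fun x : ℝ => -(x * rexp (-c * x ^ 2)) := by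
      funext x; rw [neg_sq]; ring
    rw [heq, integral_neg] at h
    linarith
  rw [hodd, mul_zero]

lemma integrable_sq_gaussianReal {v : ℝ≥0} (hv : v ≠ 0) :
    Integrable (fun x : ℝ => x ^ 2) (gaussianReal 0 v) := by
  apply integrable_gaussianReal 0 hv
  have hvpos : (0:ℝ) < v := by positivity
  have hb : 0 < (2 * (v:ℝ))⁻¹ := by positivity
  have hint2 : Integrable (fun x : ℝ => x ^ 2 * rexp (-(2 * (v:ℝ))⁻¹ * x ^ 2)) := by
    have h0 := integrable_rpow_mul_exp_neg_mul_sq hb (s := 2) (by norm_num)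
    have heq : (fun x : ℝ => x ^ (2:ℝ) * rexp (-(2 * (v:ℝ))⁻¹ * x ^ 2))
        = fun x : ℝ => x ^ 2 * rexp (-(2 * (v:ℝ))⁻¹ * x ^ 2) := by
      funext x
      rw [show ((2:ℝ)) = ((2:ℕ):ℝ) by norm_num, Real.rpow_natCast]
    rwa [heq] at h0
  have h := hint2.const_mul (√(2 * π * (v:ℝ)))⁻¹
  refine h.congr (.of_forall fun x => ?_)
  simpa using (pdf_zero_mul v (fun y => y ^ 2) x).symm

lemma integral_sq_gaussianReal {v : ℝ≥0} (hv : v ≠ 0) :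
    ∫ x, x ^ 2 ∂(gaussianReal 0 v) = v := by
  rw [integral_gaussianReal_eq 0 hv]
  simp_rw [pdf_zero_mul v (fun x => x ^ 2)]
  rw [integral_const_mul]
  have hvpos : (0:ℝ) < v := by positivity
  have hb : 0 < (2 * (v:ℝ))⁻¹ := by positivity
  rw [integral_sq_mul_exp hb]
  rw [show π / (2 * (v:ℝ))⁻¹ = 2 * π * v by field_simp]
  rw [show (2 * (2 * (v:ℝ))⁻¹) = (v:ℝ)⁻¹ by field_simp]
  have hsq : √(2 * π * (v:ℝ)) ≠ 0 := by positivity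
  rw [div_eq_mul_inv, inv_inv, ← mul_assoc, inv_mul_cancel₀ hsq, one_mul]

end NeymanScottAux

open NeymanScottAux

theorem neyman_scott_mle_inconsistent
    {Ω : Type*} [MeasureSpace Ω] [IsProbabilityMeasure (ℙ : Measure Ω)]
    (k : ℕ) (hk : 2 ≤ k) (θ : ℕ → ℝ) (σ2 : NNReal) (hσ2 : 0 < σ2)
    (X : ℕ → Fin k → Ω → ℝ)
    (hmeas : ∀ i j, Measurable (X i j))
    (hindep : iIndepFun
      (fun (p : ℕ × Fin k) ω => X p.1 p.2 ω) ℙ)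
    (hdist : ∀ i j, Measure.map (X i j) ℙ = gaussianReal (θ i) σ2) :
    TendstoInMeasure ℙ
      (fun n ω =>
        (∑ i ∈ Finset.range n, ∑ j : Fin k,
            (X i j ω - (∑ j' : Fin k, X i j' ω) / k) ^ 2) / (n * k))
      atTop
      (fun _ => ((k : ℝ) - 1) / k * σ2) ∧
    ((k : ℝ) - 1) / k * σ2 ≠ (σ2 : ℝ) := by
  classical
  have hk0 : (k : ℝ) ≠ 0 := Nat.cast_ne_zero.2 (by omega)
  have hv : σ2 ≠ 0 := hσ2.ne'
  set Z : ℕ → Fin k → Ω → ℝ := fun i j ω => X i j ω - θ i with hZ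
  have hZmeas : ∀ i j, Measurable (Z i j) := fun i j => (hmeas i j).sub measurable_const
  have hZdist : ∀ i j, Measure.map (Z i j) ℙ = gaussianReal 0 σ2 := by
    intro i j
    have hc : Measurable (fun x : ℝ => x + (-θ i)) := measurable_id.add_const _
    have hmm : Measure.map (Z i j) ℙ
        = Measure.map (fun x => x + (-θ i)) (Measure.map (X i j) ℙ) := by
      rw [Measure.map_map hc (hmeas i j)]
      rfl
    rw [hmm, hdist i j, gaussianReal_map_add_const]
    norm_num
  have hindepZ : iIndepFun
      (fun (p : ℕ × Fin k) ω => Z p.1 p.2 ω) ℙ := by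
    have h := hindep.comp (fun p (x : ℝ) => x - θ p.1)
      (fun p => measurable_id.sub measurable_const)
    exact h
  -- moments of individual variables
  have hZint : ∀ i j, Integrable (Z i j) ℙ := by
    intro i j
    have h1 : Integrable (fun x : ℝ => x) (Measure.map (Z i j) ℙ) := by
      rw [hZdist]; exact integrable_id_gaussianReal hv
    exact (integrable_map_measure measurable_id.aestronglyMeasurable
      (hZmeas i j).aemeasurable).1 h1
  have hZmean : ∀ i j, ∫ ω, Z i j ω ∂ℙ = 0 := by
    intro i j
    calc ∫ ω, Z i j ω ∂ℙ = ∫ x, x ∂(Measure.map (Z i j) ℙ) :=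
          (integral_map (hZmeas i j).aemeasurable measurable_id.aestronglyMeasurable).symm
      _ = 0 := by rw [hZdist i j]; exact integral_id_gaussianReal hv
  have hZsqint : ∀ i j, Integrable (fun ω => Z i j ω ^ 2) ℙ := by
    intro i j
    have h1 : Integrable (fun x : ℝ => x ^ 2) (Measure.map (Z i j) ℙ) := by
      rw [hZdist]; exact integrable_sq_gaussianReal hv
    exact (integrable_map_measure (measurable_id.pow_const 2).aestronglyMeasurable
      (hZmeas i j).aemeasurable).1 h1
  have hZsq : ∀ i j, ∫ ω, Z i j ω ^ 2 ∂ℙ = σ2 := by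
    intro i j
    calc ∫ ω, Z i j ω ^ 2 ∂ℙ = ∫ x, x ^ 2 ∂(Measure.map (Z i j) ℙ) :=
          (integral_map (hZmeas i j).aemeasurable
            (measurable_id.pow_const 2).aestronglyMeasurable).symm
      _ = σ2 := by rw [hZdist i j]; exact integral_sq_gaussianReal hv
  have hZindep2 : ∀ i (j j' : Fin k), j ≠ j' → IndepFun (Z i j) (Z i j') ℙ := by
    intro i j j' h
    exact hindepZ.indepFun (show ((i, j) : ℕ × Fin k) ≠ (i, j') by simpa using h)
  have hZmulint : ∀ i (j j' : Fin k), j ≠ j' →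
      Integrable (fun ω => Z i j ω * Z i j' ω) ℙ := by
    intro i j j' h
    exact (hZindep2 i j j' h).integrable_mul (hZint i j) (hZint i j')
  have hZmul : ∀ i (j j' : Fin k), j ≠ j' → ∫ ω, Z i j ω * Z i j' ω ∂ℙ = 0 := by
    intro i j j' h
    have := (hZindep2 i j j' h).integral_fun_mul_eq_mul_integral (hZint i j).aestronglyMeasurable (hZint i j').aestronglyMeasurable
    calc ∫ ω, Z i j ω * Z i j' ω ∂ℙ = (∫ ω, Z i j ω ∂ℙ) * ∫ ω, Z i j' ω ∂ℙ := this
      _ = 0 := by rw [hZmean, zero_mul]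
  -- the block variables
  set Y : ℕ → Ω → ℝ :=
    fun i ω => ∑ j : Fin k, (Z i j ω - (∑ j' : Fin k, Z i j' ω) / k) ^ 2 with hY
  have hYexp : ∀ i ω, Y i ω = (∑ j : Fin k, Z i j ω ^ 2)
      - (∑ j : Fin k, ∑ j' : Fin k, Z i j ω * Z i j' ω) / k := by
    intro i ω
    have hSS : (∑ j : Fin k, ∑ j' : Fin k, Z i j ω * Z i j' ω)
        = (∑ j : Fin k, Z i j ω) ^ 2 := by
      rw [sq, Finset.sum_mul_sum]
    rw [hSS]
    simp only [hY]
    set S := ∑ j : Fin k, Z i j ω with hS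
    have hterm : ∀ j : Fin k, (Z i j ω - S / k) ^ 2
        = Z i j ω ^ 2 - 2 * (S / k) * Z i j ω + (S / k) ^ 2 := fun j => by ring
    rw [Finset.sum_congr rfl fun j _ => hterm j, Finset.sum_add_distrib,
      Finset.sum_sub_distrib, ← Finset.mul_sum, ← hS, Finset.sum_const,
      Finset.card_univ, Fintype.card_fin, nsmul_eq_mul]
    field_simp
    ring
  have hYint : ∀ i, Integrable (Y i) ℙ := by
    intro i
    have heq : Y i = fun ω => (∑ j : Fin k, Z i j ω ^ 2)
        - (∑ j : Fin k, ∑ j' : Fin k, Z i j ω * Z i j' ω) / k := funext (hYexp i)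
    rw [heq]
    refine Integrable.sub (integrable_finset_sum _ fun j _ => hZsqint i j)
      (Integrable.div_const ?_ _)
    refine integrable_finset_sum _ fun j _ => integrable_finset_sum _ fun j' _ => ?_
    by_cases h : j = j'
    · subst h
      have := hZsqint i j
      simpa [pow_two] using this
    · exact hZmulint i j j' h
  have hYmean : ∫ ω, Y 0 ω ∂ℙ = ((k : ℝ) - 1) * σ2 := by
    have heq : Y 0 = fun ω => (∑ j : Fin k, Z 0 j ω ^ 2)
        - (∑ j : Fin k, ∑ j' : Fin k, Z 0 j ω * Z 0 j' ω) / k := funext (hYexp 0)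
    have hint1 : Integrable (fun ω => ∑ j : Fin k, Z 0 j ω ^ 2) ℙ :=
      integrable_finset_sum _ fun j _ => hZsqint 0 j
    have hint2 : Integrable (fun ω => ∑ j : Fin k, ∑ j' : Fin k, Z 0 j ω * Z 0 j' ω) ℙ := by
      refine integrable_finset_sum _ fun j _ => integrable_finset_sum _ fun j' _ => ?_
      by_cases h : j = j'
      · subst h; simpa [pow_two] using hZsqint 0 j
      · exact hZmulint 0 j j' h
    rw [heq, integral_sub hint1 (hint2.div_const _), integral_div,
      integral_finset_sum _ (fun j _ => hZsqint 0 j),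
      integral_finset_sum _ (fun j _ => by
        refine integrable_finset_sum _ fun j' _ => ?_
        by_cases h : j = j'
        · subst h; simpa [pow_two] using hZsqint 0 j
        · exact hZmulint 0 j j' h)]
    have hinner : ∀ j : Fin k,
        (∫ ω, ∑ j' : Fin k, Z 0 j ω * Z 0 j' ω ∂ℙ) = (σ2 : ℝ) := by
      intro j
      rw [integral_finset_sum _ (fun j' _ => by
        by_cases h : j = j'
        · subst h; simpa [pow_two] using hZsqint 0 j
        · exact hZmulint 0 j j' h)]
      rw [Finset.sum_eq_single j]
      · have := hZsq 0 j
        simpa [pow_two] using this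
      · intro b _ hb
        exact hZmul 0 j b (fun h => hb h.symm)
      · intro h
        exact absurd (Finset.mem_univ j) h
    rw [Finset.sum_congr rfl (fun j _ => hZsq 0 j),
      Finset.sum_congr rfl (fun j _ => hinner j)]
    simp only [Finset.sum_const, Finset.card_univ, Fintype.card_fin, nsmul_eq_mul]
    field_simp
  -- independence of blocks
  set Sfin : ℕ → Finset (ℕ × Fin k) := fun i =>
    Finset.univ.map ⟨fun j => (i, j), fun j j' h => (Prod.mk.inj h).2⟩ with hSfin
  have hmemS : ∀ i j, (i, j) ∈ Sfin i := fun i j =>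
    Finset.mem_map_of_mem _ (Finset.mem_univ j)
  have hYindep : Pairwise (Function.onFun (IndepFun · · ℙ) Y) := by
    intro a b hab
    have hdisj : Disjoint (Sfin a) (Sfin b) := by
      rw [Finset.disjoint_left]
      rintro p hpa hpb
      simp only [hSfin, Finset.mem_map, Finset.mem_univ, Function.Embedding.coeFn_mk,
        true_and] at hpa hpb
      obtain ⟨j, rfl⟩ := hpa
      obtain ⟨j', hj'⟩ := hpb
      exact hab (congrArg Prod.fst hj').symm
    have hblock := hindep.indepFun_finset (Sfin a) (Sfin b) hdisj
      (fun p => hmeas p.1 p.2)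
    let g : ∀ i : ℕ, ({p : ℕ × Fin k // p ∈ Sfin i} → ℝ) → ℝ := fun i v =>
      ∑ j : Fin k, ((v ⟨(i, j), hmemS i j⟩ - θ i)
        - (∑ j' : Fin k, (v ⟨(i, j'), hmemS i j'⟩ - θ i)) / k) ^ 2
    have hgmeas : ∀ i, Measurable (g i) := by
      intro i
      refine Finset.measurable_sum _ fun j _ => ?_
      refine Measurable.pow_const ?_ 2
      refine Measurable.sub ?_ ?_
      · exact (measurable_pi_apply (⟨(i, j), hmemS i j⟩ : {p : ℕ × Fin k // p ∈ Sfin i})).sub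
          measurable_const
      · refine Measurable.div_const ?_ _
        refine Finset.measurable_sum _ fun j' _ => ?_
        exact (measurable_pi_apply (⟨(i, j'), hmemS i j'⟩ : {p : ℕ × Fin k // p ∈ Sfin i})).sub
          measurable_const
    have := hblock.comp (hgmeas a) (hgmeas b)
    exact this
  -- identical distribution of blocks
  have hmapV : ∀ i, Measure.map (fun ω (j : Fin k) => Z i j ω) ℙ
      = Measure.pi (fun _ : Fin k => gaussianReal 0 σ2) := by
    intro i
    have hVmeas : Measurable (fun ω (j : Fin k) => Z i j ω) :=
      measurable_pi_lambda _ fun j => hZmeas i j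
    refine (Measure.pi_eq fun s hs => ?_).symm
    rw [Measure.map_apply hVmeas (MeasurableSet.univ_pi hs)]
    have hpre : (fun ω (j : Fin k) => Z i j ω) ⁻¹' (univ.pi s)
        = ⋂ j : Fin k, Z i j ⁻¹' s j := by
      ext ω; simp [Set.mem_pi]
    rw [hpre]
    have hmeas_sets : ∀ p ∈ Sfin i,
        MeasurableSet (if p.1 = i then s p.2 else (univ : Set ℝ)) := by
      intro p _
      split
      · exact hs p.2
      · exact MeasurableSet.univ
    have key := hindepZ.measure_inter_preimage_eq_mul (Sfin i)
      (sets := fun p => if p.1 = i then s p.2 else univ) hmeas_sets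
    have hsets : (⋂ p ∈ Sfin i, (fun ω => Z p.1 p.2 ω) ⁻¹'
        (if p.1 = i then s p.2 else univ)) = ⋂ j : Fin k, Z i j ⁻¹' s j := by
      ext ω
      simp only [Set.mem_iInter, Set.mem_preimage, hSfin, Finset.mem_map,
        Finset.mem_univ, Function.Embedding.coeFn_mk, true_and]
      constructor
      · intro h j
        have h2 := h (i, j) ⟨j, rfl⟩
        rwa [if_pos rfl] at h2
      · rintro h p ⟨j, rfl⟩
        show Z i j ω ∈ (if i = i then s j else univ)
        rw [if_pos rfl]
        exact h j
    rw [← hsets, key]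
    rw [hSfin]
    simp only [Finset.prod_map, Function.Embedding.coeFn_mk]
    refine Finset.prod_congr rfl fun j _ => ?_
    show ℙ (Z i j ⁻¹' (if i = i then s j else univ)) = _
    rw [if_pos rfl]
    rw [← Measure.map_apply (hZmeas i j) (hs j), hZdist i j]
  have hident : ∀ i, IdentDistrib (Y i) (Y 0) ℙ ℙ := by
    intro i
    have hg : Measurable (fun v : Fin k → ℝ =>
        ∑ j : Fin k, (v j - (∑ j' : Fin k, v j') / k) ^ 2) := by
      refine Finset.measurable_sum _ fun j _ => ?_
      exact ((measurable_pi_apply j).sub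
        ((Finset.measurable_sum Finset.univ fun (j' : Fin k) _ =>
          measurable_pi_apply j').div_const _)).pow_const 2
    have hVi : IdentDistrib (fun ω (j : Fin k) => Z i j ω)
        (fun ω (j : Fin k) => Z 0 j ω) ℙ ℙ :=
      ⟨(measurable_pi_lambda _ fun j => hZmeas i j).aemeasurable,
       (measurable_pi_lambda _ fun j => hZmeas 0 j).aemeasurable,
       by rw [hmapV i, hmapV 0]⟩
    exact hVi.comp hg
  -- strong law of large numbers
  have hlln := strong_law_ae (μ := ℙ) Y (hYint 0) hYindep hident
  have hXZ : ∀ i (ω : Ω), (∑ j : Fin k,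
      (X i j ω - (∑ j' : Fin k, X i j' ω) / k) ^ 2) = Y i ω := by
    intro i ω
    have hsum : (∑ j' : Fin k, X i j' ω) = (∑ j' : Fin k, Z i j' ω) + k * θ i := by
      simp only [hZ, Finset.sum_sub_distrib, Finset.sum_const, Finset.card_univ,
        Fintype.card_fin, nsmul_eq_mul]
      ring
    simp only [hY]
    refine Finset.sum_congr rfl fun j _ => ?_
    rw [hsum]
    have hZval : Z i j ω = X i j ω - θ i := rfl
    rw [hZval]
    congr 1
    field_simp
    ring
  constructor
  · have hfn_meas : ∀ n, AEStronglyMeasurable (fun ω =>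
        (∑ i ∈ Finset.range n, ∑ j : Fin k,
          (X i j ω - (∑ j' : Fin k, X i j' ω) / k) ^ 2) / ((n : ℝ) * k)) ℙ := by
      intro n
      refine Measurable.aestronglyMeasurable ?_
      refine Measurable.div_const ?_ _
      refine Finset.measurable_sum _ fun i _ => Finset.measurable_sum _ fun j _ => ?_
      exact ((hmeas i j).sub
        ((Finset.measurable_sum _ fun j' _ => hmeas i j').div_const _)).pow_const 2
    refine tendstoInMeasure_of_tendsto_ae hfn_meas ?_
    filter_upwards [hlln] with ω hω
    have hEq : ((k : ℝ) - 1) / k * σ2 = (∫ ω, Y 0 ω ∂ℙ) / k := by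
      rw [hYmean]; ring
    rw [hEq]
    have h2 := hω.div_const (k : ℝ)
    refine h2.congr fun n => ?_
    rw [smul_eq_mul]
    rw [Finset.sum_congr rfl fun i _ => hXZ i ω]
    rw [inv_mul_eq_div, div_div]
  · intro h
    have hk2 : (2 : ℝ) ≤ k := by exact_mod_cast hk
    have hσ2' : (0 : ℝ) < σ2 := hσ2
    have hkpos : (0 : ℝ) < k := by linarith
    rw [div_mul_eq_mul_div, div_eq_iff (ne_of_gt hkpos)] at h
    nlinarith
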